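/- arXiv:2010.12330 — 5 statements merged into one kernel-verified Lean document; each statement's English description precedes it below -/
import Mathlib

section
/- Every tournament on 2^(k-1) vertices contains a transitive subtournament of size at least k. -/
open scoped Classical

def IsTournament {V : Type*} (E : V → V → Prop) : Prop :=
  (∀ v, ¬ E v v) ∧ ∀ u v : V, u ≠ v → (E u v ↔ ¬ E v u)

def TransOn {V : Type*} (E : V → V → Prop) (s : Finset V) : Prop :=
  ∀ a ∈ s, ∀ b ∈ s, ∀ c ∈ s, E a b → E b c → E a c

noncomputable def trOn {V : Type*} (E : V → V → Prop) (A : Finset V) : ℕ :=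
  A.powerset.sup fun s => if TransOn E s then s.card else 0

noncomputable def trT {V : Type*} (E : V → V → Prop) [Fintype V] : ℕ :=
  trOn E Finset.univ

def IsCritical {V : Type*} [Fintype V] (E : V → V → Prop) (ε : ℝ) : Prop :=
  (trT E : ℝ) < (Fintype.card V : ℝ) ^ ε ∧
  ∀ A : Finset V, A ≠ Finset.univ → ((A.card : ℝ) ^ ε ≤ (trOn E A : ℝ))

noncomputable def dens {V : Type*} (E : V → V → Prop) (X Y : Finset V) : ℝ :=
  (((X ×ˢ Y).filter fun p => E p.1 p.2).card : ℝ) / ((X.card : ℝ) * (Y.card : ℝ))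

def SmoothStruct {V : Type*} [Fintype V] (E : V → V → Prop) (c lam : ℝ) {m : ℕ}
    (w : Fin m → Bool) (S : Fin m → Finset V) : Prop :=
  (∀ i j : Fin m, i ≠ j → Disjoint (S i) (S j)) ∧
  (∀ i, w i = false → c * (Fintype.card V : ℝ) ≤ ((S i).card : ℝ)) ∧
  (∀ i, w i = true → TransOn E (S i) ∧ c * (trT E : ℝ) ≤ ((S i).card : ℝ)) ∧
  (∀ i j : Fin m, i < j →
    (∀ v ∈ S i, 1 - lam ≤ dens E {v} (S j)) ∧ (∀ v ∈ S j, 1 - lam ≤ dens E (S i) {v}))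

lemma trans_insert_out {V : Type*} (E : V → V → Prop) (hT : IsTournament E)
    (s : Finset V) (v : V) (hvs : v ∉ s) (hv : ∀ u ∈ s, E v u) (hs : TransOn E s) :
    TransOn E (insert v s) := by
  intro a ha b hb c hc hab hbc
  rcases Finset.mem_insert.1 ha with ha | ha
  · rcases Finset.mem_insert.1 hb with hb | hb
    · rw [ha, hb] at hab; exact absurd hab (hT.1 v)
    · rcases Finset.mem_insert.1 hc with hc | hc
      · rw [hc] at hbc
        have hbv : b ≠ v := fun h => hvs (h ▸ hb)
        exact absurd (hv b hb) ((hT.2 b v hbv).mp hbc)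
      · rw [ha]; exact hv c hc
  · rcases Finset.mem_insert.1 hb with hb | hb
    · rw [hb] at hab
      have hav : a ≠ v := fun h => hvs (h ▸ ha)
      exact absurd (hv a ha) ((hT.2 a v hav).mp hab)
    · rcases Finset.mem_insert.1 hc with hc | hc
      · rw [hc] at hbc
        have hbv : b ≠ v := fun h => hvs (h ▸ hb)
        exact absurd (hv b hb) ((hT.2 b v hbv).mp hbc)
      · exact hs a ha b hb c hc hab hbc

lemma trans_insert_in {V : Type*} (E : V → V → Prop) (hT : IsTournament E)
    (s : Finset V) (v : V) (hvs : v ∉ s) (hv : ∀ u ∈ s, E u v) (hs : TransOn E s) :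
    TransOn E (insert v s) := by
  intro a ha b hb c hc hab hbc
  rcases Finset.mem_insert.1 ha with ha | ha
  · rcases Finset.mem_insert.1 hb with hb | hb
    · rw [ha, hb] at hab; exact absurd hab (hT.1 v)
    · rw [ha] at hab
      have hbv : b ≠ v := fun h => hvs (h ▸ hb)
      exact absurd hab ((hT.2 b v hbv).mp (hv b hb))
  · rcases Finset.mem_insert.1 hb with hb | hb
    · rw [hb] at hbc
      rcases Finset.mem_insert.1 hc with hc | hc
      · rw [hc] at hbc; exact absurd hbc (hT.1 v)
      · have hcv : c ≠ v := fun h => hvs (h ▸ hc)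
        exact absurd hbc ((hT.2 c v hcv).mp (hv c hc))
    · rcases Finset.mem_insert.1 hc with hc | hc
      · rw [hc]; exact hv a ha
      · exact hs a ha b hb c hc hab hbc

lemma tour_aux {V : Type*} (E : V → V → Prop) (hT : IsTournament E) :
    ∀ k (A : Finset V), 2 ^ k ≤ A.card → ∃ s ⊆ A, TransOn E s ∧ s.card = k + 1 := by
  intro k
  induction k with
  | zero =>
    intro A hA
    obtain ⟨v, hv⟩ := Finset.card_pos.mp (by omega : 0 < A.card)
    refine ⟨{v}, Finset.singleton_subset_iff.mpr hv, ?_, rfl⟩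
    intro a ha b hb c hc hab _
    simp only [Finset.mem_singleton] at ha hb
    rw [ha, hb] at hab
    exact absurd hab (hT.1 v)
  | succ k ih =>
    intro A hA
    obtain ⟨v, hv⟩ := Finset.card_pos.mp
      (by have : 0 < 2 ^ (k + 1) := pow_pos (by norm_num) _; omega : 0 < A.card)
    set Out := (A.erase v).filter (fun u => E v u) with hOut
    set Inn := (A.erase v).filter (fun u => ¬ E v u) with hInn
    have hsplit : Out.card + Inn.card = (A.erase v).card := by
      rw [hOut, hInn]
      exact Finset.card_filter_add_card_filter_not _
    have hcard : (A.erase v).card = A.card - 1 := Finset.card_erase_of_mem hv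
    have hbig : 2 ^ k ≤ Out.card ∨ 2 ^ k ≤ Inn.card := by
      by_contra h
      push_neg at h
      have := pow_succ 2 k
      omega
    rcases hbig with h | h
    · obtain ⟨s, hsub, hst, hsc⟩ := ih Out h
      have hvns : v ∉ s := fun hmem =>
        Finset.notMem_erase v A (Finset.mem_of_mem_filter _ (hsub hmem))
      refine ⟨insert v s, ?_, ?_, ?_⟩
      · intro x hx
        rcases Finset.mem_insert.1 hx with hx | hx
        · rw [hx]; exact hv
        · exact Finset.mem_of_mem_erase (Finset.mem_of_mem_filter _ (hsub hx))
      · exact trans_insert_out E hT s v hvns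
          (fun u hu => (Finset.mem_filter.1 (hsub hu)).2) hst
      · rw [Finset.card_insert_of_notMem hvns, hsc]
    · obtain ⟨s, hsub, hst, hsc⟩ := ih Inn h
      have hvns : v ∉ s := fun hmem =>
        Finset.notMem_erase v A (Finset.mem_of_mem_filter _ (hsub hmem))
      refine ⟨insert v s, ?_, ?_, ?_⟩
      · intro x hx
        rcases Finset.mem_insert.1 hx with hx | hx
        · rw [hx]; exact hv
        · exact Finset.mem_of_mem_erase (Finset.mem_of_mem_filter _ (hsub hx))
      · refine trans_insert_in E hT s v hvns (fun u hu => ?_) hst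
        have h1 := (Finset.mem_filter.1 (hsub hu)).2
        have hne : u ≠ v := Finset.ne_of_mem_erase (Finset.mem_of_mem_filter _ (hsub hu))
        exact (hT.2 u v hne).mpr h1
      · rw [Finset.card_insert_of_notMem hvns, hsc]

/-- Every tournament on `2^(k-1)` vertices contains a transitive subtournament of
size at least `k`. -/
theorem every_tournament_contains_large_transitive {V : Type*} [Fintype V]
    (E : V → V → Prop) (k : ℕ) (hT : IsTournament E)
    (hcard : Fintype.card V = 2 ^ (k - 1)) :
    ∃ s : Finset V, TransOn E s ∧ k ≤ s.card := by
  rcases Nat.eq_zero_or_pos k with rfl | hk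
  · exact ⟨∅, by intro a ha; simp at ha, Nat.zero_le _⟩
  · obtain ⟨s, _, hst, hsc⟩ := tour_aux E hT (k - 1) Finset.univ
      (by rw [Finset.card_univ, hcard])
    exact ⟨s, hst, by omega⟩
end

section
/- Let T be an ε-critical tournament with |T| = n, and let c, f > 0 be constants with ε < log_c(1 - f). Then for every A ⊆ V(T) with |A| ≥ cn and every transitive subtournament G of T with |G| ≥ f·tr(T) and V(G) ∩ A = ∅, the set A is not complete from V(G) and A is not complete to V(G). -/
open scoped Classical

lemma transOn_union_aux {V : Type*} (E : V → V → Prop) (hT : IsTournament E)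
    (X Y : Finset V) (hd : Disjoint X Y) (hX : TransOn E X) (hY : TransOn E Y)
    (hcomp : ∀ x ∈ X, ∀ y ∈ Y, E x y) : TransOn E (X ∪ Y) := by
  have ne : ∀ {x y : V}, x ∈ X → y ∈ Y → x ≠ y := fun hx hy h =>
    Finset.disjoint_left.mp hd hx (h ▸ hy)
  intro a ha b hb c hc hab hbc
  simp only [Finset.mem_union] at ha hb hc
  rcases ha with ha | ha <;> rcases hc with hc | hc
  · rcases hb with hb | hb
    · exact hX a ha b hb c hc hab hbc
    · exact absurd hbc ((hT.2 c b (ne hc hb)).mp (hcomp c hc b hb))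
  · exact hcomp a ha c hc
  · rcases hb with hb | hb
    · exact absurd hab ((hT.2 b a (ne hb ha)).mp (hcomp b hb a ha))
    · exact absurd hbc ((hT.2 c b (ne hc hb)).mp (hcomp c hc b hb))
  · rcases hb with hb | hb
    · exact absurd hab ((hT.2 b a (ne hb ha)).mp (hcomp b hb a ha))
    · exact hY a ha b hb c hc hab hbc

lemma card_le_trOn_aux {V : Type*} (E : V → V → Prop) {A S : Finset V}
    (hSA : S ⊆ A) (hS : TransOn E S) : S.card ≤ trOn E A := by
  have := Finset.le_sup (f := fun s => if TransOn E s then s.card else 0)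
    (Finset.mem_powerset.mpr hSA)
  rw [trOn]
  simpa [hS] using this

lemma exists_trans_eq_trOn_aux {V : Type*} (E : V → V → Prop) (A : Finset V) :
    ∃ S, S ⊆ A ∧ TransOn E S ∧ S.card = trOn E A := by
  classical
  obtain ⟨s, hs, hval⟩ := Finset.exists_mem_eq_sup A.powerset
    ⟨∅, Finset.empty_mem_powerset A⟩ (fun s => if TransOn E s then s.card else 0)
  by_cases h : TransOn E s
  · exact ⟨s, Finset.mem_powerset.mp hs, h, by rw [trOn, hval, if_pos h]⟩
  · refine ⟨∅, Finset.empty_subset A, ?_, ?_⟩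
    · intro a ha; simp at ha
    · rw [Finset.card_empty, trOn, hval, if_neg h]

/-- In an ε-critical tournament with `ε < log_c (1-f)`, a set `A` with
`|A| ≥ c·n` is never complete from nor complete to a disjoint transitive
subtournament `G` with `|G| ≥ f·tr(T)`. -/
theorem critical_not_complete {V : Type*} [Fintype V] (E : V → V → Prop)
    (ε c f : ℝ) (hT : IsTournament E) (hε : 0 < ε) (hcrit : IsCritical E ε)
    (hc : 0 < c) (hf : 0 < f) (hlog : ε < Real.logb c (1 - f))
    (A G : Finset V) (hA : c * (Fintype.card V : ℝ) ≤ (A.card : ℝ))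
    (hG : TransOn E G) (hGsize : f * (trT E : ℝ) ≤ (G.card : ℝ))
    (hdisj : Disjoint A G) :
    (¬ ∀ g ∈ G, ∀ a ∈ A, E g a) ∧ (¬ ∀ a ∈ A, ∀ g ∈ G, E a g) := by
  obtain ⟨htr_lt, hcrit2⟩ := hcrit
  -- V is nonempty
  have hn : 0 < Fintype.card V := by
    by_contra h
    push_neg at h
    have h0 : Fintype.card V = 0 := Nat.le_zero.mp h
    rw [h0] at htr_lt
    simp only [Nat.cast_zero, Real.zero_rpow hε.ne'] at htr_lt
    exact absurd htr_lt (not_lt.mpr (Nat.cast_nonneg _))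
  -- trT ≥ 1
  have htr1 : (1 : ℕ) ≤ trT E := by
    obtain ⟨v⟩ := Fintype.card_pos_iff.mp hn
    have hsing : TransOn E ({v} : Finset V) := by
      intro a ha b hb c hc hab _
      simp only [Finset.mem_singleton] at ha hb hc
      subst ha; subst hb; subst hc; exact hab
    have := card_le_trOn_aux E (Finset.subset_univ {v}) hsing
    simpa [trT] using this
  have htr1R : (1 : ℝ) ≤ (trT E : ℝ) := by exact_mod_cast htr1
  -- G is nonempty
  have hGpos : (0 : ℝ) < (G.card : ℝ) :=
    lt_of_lt_of_le (by positivity) hGsize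
  obtain ⟨g0, hg0⟩ := Finset.card_pos.mp (by exact_mod_cast hGpos)
  -- A is a proper subset
  have hAne : A ≠ Finset.univ := by
    intro h
    exact Finset.disjoint_left.mp hdisj (h ▸ Finset.mem_univ g0) hg0
  have htrA : (A.card : ℝ) ^ ε ≤ (trOn E A : ℝ) := hcrit2 A hAne
  -- c^ε > 1 - f
  have hcε : 1 - f < c ^ ε := by
    rcases le_or_gt (1 - f) 0 with h1f | h1f
    · exact lt_of_le_of_lt h1f (Real.rpow_pos_of_pos hc ε)
    · -- need log c < 0
      have hlogc : Real.log c < 0 := by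
        rcases lt_trichotomy (Real.log c) 0 with h | h | h
        · exact h
        · rw [Real.logb, h, div_zero] at hlog
          exact absurd hlog (not_lt.mpr hε.le)
        · have hlog1f : Real.log (1 - f) < 0 :=
            Real.log_neg h1f (by linarith)
          have : Real.logb c (1 - f) < 0 := div_neg_of_neg_of_pos hlog1f h
          linarith
      have : Real.log (1 - f) < ε * Real.log c := by
        rw [Real.logb] at hlog
        calc Real.log (1 - f) = (Real.log (1 - f) / Real.log c) * Real.log c :=
              (div_mul_cancel₀ _ hlogc.ne).symm
          _ < ε * Real.log c := by
              exact mul_lt_mul_of_neg_right hlog hlogc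
      calc 1 - f = Real.exp (Real.log (1 - f)) := (Real.exp_log h1f).symm
        _ < Real.exp (ε * Real.log c) := Real.exp_lt_exp.mpr this
        _ = c ^ ε := by rw [Real.rpow_def_of_pos hc, mul_comm]
  -- a maximum transitive subset of A
  obtain ⟨S, hSA, hStrans, hScard⟩ := exists_trans_eq_trOn_aux E A
  have hSG : Disjoint S G := hdisj.mono_left hSA
  have hGS : Disjoint G S := hSG.symm
  -- lower bound on |S|
  have hSlow : c ^ ε * (Fintype.card V : ℝ) ^ ε ≤ (S.card : ℝ) := by
    have h1 : (c * (Fintype.card V : ℝ)) ^ ε ≤ (A.card : ℝ) ^ ε :=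
      Real.rpow_le_rpow (by positivity) hA hε.le
    rw [Real.mul_rpow hc.le (Nat.cast_nonneg _)] at h1
    rw [hScard]
    exact le_trans h1 htrA
  -- the key numeric contradiction
  have hnum : ¬ ((G.card : ℝ) + (S.card : ℝ) ≤ (trT E : ℝ)) := by
    intro hle
    have hcεpos : (0 : ℝ) < c ^ ε := Real.rpow_pos_of_pos hc ε
    nlinarith [mul_lt_mul_of_pos_left htr_lt hcεpos,
      mul_lt_mul_of_pos_right hcε (lt_of_lt_of_le one_pos htr1R)]
  constructor
  · intro h
    apply hnum
    have hcomp : ∀ x ∈ G, ∀ y ∈ S, E x y := fun x hx y hy => h x hx y (hSA hy)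
    have htrans := transOn_union_aux E hT G S hGS hG hStrans hcomp
    have hle : (G ∪ S).card ≤ trT E :=
      card_le_trOn_aux E (Finset.subset_univ _) htrans
    rw [Finset.card_union_of_disjoint hGS] at hle
    exact_mod_cast hle
  · intro h
    apply hnum
    have hcomp : ∀ x ∈ S, ∀ y ∈ G, E x y := fun x hx y hy => h x (hSA hx) y hy
    have htrans := transOn_union_aux E hT S G hSG hStrans hG hcomp
    have hle : (S ∪ G).card ≤ trT E :=
      card_le_trOn_aux E (Finset.subset_univ _) htrans
    rw [Finset.card_union_of_disjoint hSG] at hle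
    have : (S.card : ℝ) + (G.card : ℝ) ≤ (trT E : ℝ) := by exact_mod_cast hle
    linarith
end

section
/- Let T be an ε-critical tournament with |T| = n and let c > 0 satisfy ε < log_{c/2}(1/2). Then for every two disjoint subsets X, Y ⊆ V(T) with |X| ≥ cn and |Y| ≥ cn, there exist an integer k ≥ cn/2 and vertices x_1,...,x_k ∈ X and y_1,...,y_k ∈ Y (all distinct) such that y_i is adjacent to x_i (i.e., the arc (y_i, x_i) is present) for i = 1,...,k. -/
open scoped Classical

lemma le_trOn {V : Type*} (E : V → V → Prop) {A s : Finset V} (hs : s ⊆ A)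
    (h : TransOn E s) : s.card ≤ trOn E A := by
  have := Finset.le_sup (f := fun s => if TransOn E s then s.card else 0)
    (Finset.mem_powerset.2 hs)
  simpa [h, trOn] using this

lemma exists_transOn {V : Type*} (E : V → V → Prop) (A : Finset V) :
    ∃ s ⊆ A, TransOn E s ∧ s.card = trOn E A := by
  obtain ⟨s, hs, hval⟩ := Finset.exists_mem_eq_sup A.powerset
    ⟨∅, Finset.empty_mem_powerset A⟩ (fun s => if TransOn E s then s.card else 0)
  by_cases h : TransOn E s
  · exact ⟨s, Finset.mem_powerset.1 hs, h, by rw [trOn, hval, if_pos h]⟩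
  · refine ⟨∅, Finset.empty_subset A, ?_, ?_⟩
    · intro a ha; exact absurd ha (by simp)
    · simp [trOn, hval, h]

/-- Greedy matching of backward pairs. -/
lemma matching {V : Type*} (E : V → V → Prop) :
    ∀ (X : Finset V), ∀ Y : Finset V, Disjoint X Y →
    ∃ (k : ℕ) (x y : Fin k → V) (X' Y' : Finset V),
      Function.Injective x ∧ Function.Injective y ∧
      (∀ i, x i ∈ X) ∧ (∀ i, y i ∈ Y) ∧ (∀ i, E (y i) (x i)) ∧
      X' ⊆ X ∧ Y' ⊆ Y ∧ X'.card + k = X.card ∧ Y'.card + k = Y.card ∧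
      ∀ a ∈ X', ∀ b ∈ Y', ¬ E b a := by
  intro X
  induction X using Finset.strongInduction with
  | _ X ih =>
    intro Y hdisj
    by_cases h : ∃ a ∈ X, ∃ b ∈ Y, E b a
    · obtain ⟨a, ha, b, hb, hE⟩ := h
      have hsub : X.erase a ⊂ X := Finset.erase_ssubset ha
      obtain ⟨k, x, y, X', Y', hxi, hyi, hxm, hym, hE', hX', hY', hcx, hcy, hno⟩ :=
        ih _ hsub (Y.erase b) (hdisj.mono (Finset.erase_subset _ _) (Finset.erase_subset _ _))
      refine ⟨k + 1, Fin.cons a x, Fin.cons b y, X', Y', ?_, ?_, ?_, ?_, ?_, ?_, ?_, ?_, ?_, hno⟩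
      · rw [Fin.cons_injective_iff]
        refine ⟨?_, hxi⟩
        rintro ⟨i, hi⟩
        exact (Finset.ne_of_mem_erase (hxm i)) hi
      · rw [Fin.cons_injective_iff]
        refine ⟨?_, hyi⟩
        rintro ⟨i, hi⟩
        exact (Finset.ne_of_mem_erase (hym i)) hi
      · intro i
        refine Fin.cases ?_ ?_ i
        · simpa using ha
        · intro j; simpa using Finset.mem_of_mem_erase (hxm j)
      · intro i
        refine Fin.cases ?_ ?_ i
        · simpa using hb
        · intro j; simpa using Finset.mem_of_mem_erase (hym j)
      · intro i
        refine Fin.cases ?_ ?_ i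
        · simpa using hE
        · intro j; simpa using hE' j
      · exact hX'.trans (Finset.erase_subset _ _)
      · exact hY'.trans (Finset.erase_subset _ _)
      · have h1 := Finset.card_erase_of_mem ha
        have h2 := Finset.card_pos.2 ⟨a, ha⟩
        omega
      · have h1 := Finset.card_erase_of_mem hb
        have h2 := Finset.card_pos.2 ⟨b, hb⟩
        omega
    · push_neg at h
      exact ⟨0, Fin.elim0, Fin.elim0, X, Y, Function.injective_of_subsingleton _,
        Function.injective_of_subsingleton _, fun i => i.elim0, fun i => i.elim0,
        fun i => i.elim0, Finset.Subset.refl _, Finset.Subset.refl _, by simp, by simp, h⟩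

/-- In an ε-critical tournament with `ε < log_{c/2}(1/2)`, any two disjoint sets
of size at least `cn` admit `k ≥ cn/2` disjoint "backward" pairs. -/
theorem critical_many_backward_pairs {V : Type*} [Fintype V] (E : V → V → Prop)
    (ε c : ℝ) (hT : IsTournament E) (hε : 0 < ε) (hcrit : IsCritical E ε)
    (hc : 0 < c) (hlog : ε < Real.logb (c / 2) (1 / 2))
    (X Y : Finset V) (hdisj : Disjoint X Y)
    (hX : c * (Fintype.card V : ℝ) ≤ (X.card : ℝ))
    (hY : c * (Fintype.card V : ℝ) ≤ (Y.card : ℝ)) :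
    ∃ k : ℕ, c * (Fintype.card V : ℝ) / 2 ≤ (k : ℝ) ∧
      ∃ x : Fin k → V, ∃ y : Fin k → V,
        Function.Injective x ∧ Function.Injective y ∧
        (∀ i, x i ∈ X) ∧ (∀ i, y i ∈ Y) ∧ ∀ i, E (y i) (x i) := by
  obtain ⟨k, x, y, X', Y', hxi, hyi, hxm, hym, hE, hX'sub, hY'sub, hcx, hcy, hno⟩ :=
    matching E X Y hdisj
  refine ⟨k, ?_, x, y, hxi, hyi, hxm, hym, hE⟩
  by_contra hk
  push_neg at hk
  set n : ℝ := (Fintype.card V : ℝ) with hn_def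
  have hk0 : (0:ℝ) ≤ k := Nat.cast_nonneg k
  have hn0 : (0:ℝ) ≤ n := Nat.cast_nonneg _
  have hn : 0 < n := by nlinarith
  -- sizes of the leftover sets
  have hcxR : (X'.card : ℝ) + k = X.card := by exact_mod_cast hcx
  have hcyR : (Y'.card : ℝ) + k = Y.card := by exact_mod_cast hcy
  have hX' : c * n / 2 < (X'.card : ℝ) := by linarith
  have hY' : c * n / 2 < (Y'.card : ℝ) := by linarith
  have hcn2 : 0 < c * n / 2 := by positivity
  have hX'ne : X'.Nonempty := Finset.card_pos.1 (by exact_mod_cast hcn2.trans hX')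
  have hY'ne : Y'.Nonempty := Finset.card_pos.1 (by exact_mod_cast hcn2.trans hY')
  have hdisj' : Disjoint X' Y' := hdisj.mono hX'sub hY'sub
  have hX'univ : X' ≠ Finset.univ := by
    obtain ⟨b, hb⟩ := hY'ne
    intro h
    exact (Finset.disjoint_right.1 hdisj' hb) (h ▸ Finset.mem_univ b)
  have hY'univ : Y' ≠ Finset.univ := by
    obtain ⟨a, ha⟩ := hX'ne
    intro h
    exact (Finset.disjoint_left.1 hdisj' ha) (h ▸ Finset.mem_univ a)
  obtain ⟨sX, hsX, htX, hcX⟩ := exists_transOn E X'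
  obtain ⟨sY, hsY, htY, hcY⟩ := exists_transOn E Y'
  -- all arcs go from X' to Y'
  have key : ∀ q ∈ sY, ∀ r ∈ sX, ¬ E q r := fun q hq r hr => hno r (hsX hr) q (hsY hq)
  have hforward : ∀ p ∈ sX, ∀ q ∈ sY, E p q := by
    intro p hp q hq
    have hne : p ≠ q := by
      intro h
      exact Finset.disjoint_left.1 hdisj' (hsX hp) (h ▸ hsY hq)
    exact (hT.2 p q hne).2 (key q hq p hp)
  have htU : TransOn E (sX ∪ sY) := by
    intro p hp q hq r hr hpq hqr
    rcases Finset.mem_union.1 hp with hpX | hpY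
    · rcases Finset.mem_union.1 hr with hrX | hrY
      · rcases Finset.mem_union.1 hq with hqX | hqY
        · exact htX p hpX q hqX r hrX hpq hqr
        · exact absurd hqr (key q hqY r hrX)
      · exact hforward p hpX r hrY
    · rcases Finset.mem_union.1 hq with hqX | hqY
      · exact absurd hpq (key p hpY q hqX)
      · rcases Finset.mem_union.1 hr with hrX | hrY
        · exact absurd hqr (key q hqY r hrX)
        · exact htY p hpY q hqY r hrY hpq hqr
  have hdss : Disjoint sX sY := hdisj'.mono hsX hsY
  have hle : sX.card + sY.card ≤ trT E := by
    rw [← Finset.card_union_of_disjoint hdss]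
    exact le_trOn E (Finset.subset_univ _) htU
  -- numeric part
  have hc2 : (0:ℝ) < c / 2 := by linarith
  have hlt1 : c / 2 < 1 := by
    by_contra hge
    push_neg at hge
    rcases eq_or_lt_of_le hge with heq | hgt
    · rw [← heq] at hlog
      simp [Real.logb] at hlog
      linarith
    · have := Real.logb_neg hgt (by norm_num : (0:ℝ) < 1/2) (by norm_num : (1:ℝ)/2 < 1)
      linarith
  have hlogneg : Real.log (c / 2) < 0 := Real.log_neg hc2 hlt1
  have hlog' : Real.log (1 / 2) < ε * Real.log (c / 2) := by
    rw [Real.logb] at hlog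
    exact (lt_div_iff_of_neg hlogneg).1 hlog
  have hup : (1:ℝ) / 2 < (c / 2) ^ ε := by
    have h1 : Real.log ((c / 2) ^ ε) = ε * Real.log (c / 2) := Real.log_rpow hc2 ε
    have h2 : Real.log (1 / 2) < Real.log ((c / 2) ^ ε) := by rw [h1]; exact hlog'
    exact (Real.log_lt_log_iff (by norm_num) (Real.rpow_pos_of_pos hc2 ε)).1 h2
  have A1 : (trT E : ℝ) < n ^ ε := hcrit.1
  have A2 : (sX.card : ℝ) + (sY.card : ℝ) ≤ (trT E : ℝ) := by exact_mod_cast hle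
  have A3 : ((X'.card : ℝ)) ^ ε ≤ (sX.card : ℝ) :=
    (hcrit.2 X' hX'univ).trans (le_of_eq (by exact_mod_cast hcX.symm))
  have A4 : ((Y'.card : ℝ)) ^ ε ≤ (sY.card : ℝ) :=
    (hcrit.2 Y' hY'univ).trans (le_of_eq (by exact_mod_cast hcY.symm))
  have A5 : (c / 2) ^ ε * n ^ ε ≤ ((X'.card : ℝ)) ^ ε := by
    rw [← Real.mul_rpow hc2.le hn0]
    exact Real.rpow_le_rpow (by positivity) (by linarith) hε.le
  have A6 : (c / 2) ^ ε * n ^ ε ≤ ((Y'.card : ℝ)) ^ ε := by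
    rw [← Real.mul_rpow hc2.le hn0]
    exact Real.rpow_le_rpow (by positivity) (by linarith) hε.le
  have A7 : 0 < n ^ ε := Real.rpow_pos_of_pos hn ε
  nlinarith [mul_pos (show (0:ℝ) < 2 * (c / 2) ^ ε - 1 by linarith) A7]
end

section
/- Let 0 < λ < 1 be a constant, T a tournament, and (S_1,...,S_{|w|}) a smooth (c,λ,w)-structure of T. If A is a set of k vertices lying in ⋃_{i≠j} S_i with kλ < 1, then there exists a vertex v ∈ S_j such that for every a ∈ A with a ∈ S_i: if i < j then a is adjacent to v, and if i > j then v is adjacent to a. -/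
open scoped Classical

private lemma trT_pos {V : Type*} [Fintype V] [Nonempty V] (E : V → V → Prop) :
    1 ≤ trT E := by
  obtain ⟨v⟩ := (inferInstance : Nonempty V)
  have hmem : ({v} : Finset V) ∈ (Finset.univ : Finset V).powerset := by
    simp
  have htrans : TransOn E ({v} : Finset V) := by
    intro a ha b hb c hc hab hbc
    simp only [Finset.mem_singleton] at ha hb hc
    subst ha; subst hb; subst hc; exact hab
  have := Finset.le_sup (f := fun s => if TransOn E s then s.card else 0) hmem
  simpa [trT, trOn, htrans] using this

private lemma card_prod_filter_left {V : Type*} (E : V → V → Prop) (a : V) (Y : Finset V) :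
    ((({a} : Finset V) ×ˢ Y).filter fun p => E p.1 p.2).card
      = (Y.filter fun u => E a u).card := by
  rw [Finset.singleton_product, Finset.filter_map, Finset.card_map]
  congr 1

private lemma card_prod_filter_right {V : Type*} (E : V → V → Prop) (a : V) (Y : Finset V) :
    ((Y ×ˢ ({a} : Finset V)).filter fun p => E p.1 p.2).card
      = (Y.filter fun u => E u a).card := by
  rw [Finset.product_singleton, Finset.filter_map, Finset.card_map]
  congr 1

private lemma filter_not_card_le {V : Type*} (Y : Finset V) (p : V → Prop)
    (lam : ℝ) (hY : 0 < (Y.card : ℝ))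
    (h : 1 - lam ≤ ((Y.filter p).card : ℝ) / (Y.card : ℝ)) :
    ((Y.filter fun u => ¬ p u).card : ℝ) ≤ lam * Y.card := by
  have hsum : (Y.filter p).card + (Y.filter fun u => ¬ p u).card = Y.card :=
    Finset.card_filter_add_card_filter_not (p := p)
  have hsum' : ((Y.filter p).card : ℝ) + ((Y.filter fun u => ¬ p u).card : ℝ)
      = (Y.card : ℝ) := by exact_mod_cast hsum
  have h' : (1 - lam) * (Y.card : ℝ) ≤ ((Y.filter p).card : ℝ) := by
    rw [le_div_iff₀ hY] at h
    exact h
  linarith [h']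

/-- If `kλ < 1`, then for any set `A` of `k` vertices outside `S_j` in a
smooth `(c,λ,w)`-structure there is a vertex `v ∈ S_j` compatible with all of
`A`: vertices of earlier sets beat `v` and `v` beats vertices of later sets. -/
theorem smooth_structure_compatible_vertex {V : Type*} [Fintype V] [Nonempty V]
    (E : V → V → Prop) (hT : IsTournament E) (c lam : ℝ) (hc : 0 < c)
    (hlam0 : 0 < lam) (hlam1 : lam < 1) {m : ℕ}
    (w : Fin m → Bool) (S : Fin m → Finset V) (hS : SmoothStruct E c lam w S)
    (j : Fin m) (A : Finset V) (hA : ∀ x ∈ A, ∃ i : Fin m, i ≠ j ∧ x ∈ S i)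
    (hk : (A.card : ℝ) * lam < 1) :
    ∃ v ∈ S j, ∀ a ∈ A, ∀ i : Fin m, a ∈ S i →
      (i < j → E a v) ∧ (j < i → E v a) := by
  obtain ⟨hdisj, hfalse, htrue, hdens⟩ := hS
  set Y := S j with hYdef
  have hYpos : 0 < (Y.card : ℝ) := by
    cases hw : w j with
    | false =>
      have h1 := hfalse j hw
      have h2 : (1 : ℝ) ≤ (Fintype.card V : ℝ) := by
        exact_mod_cast Fintype.card_pos
      nlinarith
    | true =>
      have h1 := (htrue j hw).2
      have h2 : (1 : ℝ) ≤ (trT E : ℝ) := by exact_mod_cast trT_pos E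
      nlinarith
  set Bad : V → Finset V := fun a => Y.filter fun u =>
    ∃ i : Fin m, i ≠ j ∧ a ∈ S i ∧ ((i < j ∧ ¬ E a u) ∨ (j < i ∧ ¬ E u a)) with hBaddef
  have hBadcard : ∀ a ∈ A, ((Bad a).card : ℝ) ≤ lam * Y.card := by
    intro a ha
    obtain ⟨i, hij, hai⟩ := hA a ha
    have huniq : ∀ i' : Fin m, a ∈ S i' → i' = i := by
      intro i' h'
      by_contra hne
      exact (Finset.disjoint_left.mp (hdisj i' i hne) h' hai)
    rcases lt_or_gt_of_ne hij with hlt | hgt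
    · -- i < j : most u in Y satisfy E a u
      have hd := (hdens i j hlt).1 a hai
      unfold dens at hd
      rw [card_prod_filter_left] at hd
      simp only [Finset.card_singleton, Nat.cast_one, one_mul] at hd
      have hle : ((Y.filter fun u => ¬ E a u).card : ℝ) ≤ lam * Y.card :=
        filter_not_card_le Y (fun u => E a u) lam hYpos hd
      have hsub : Bad a ⊆ Y.filter fun u => ¬ E a u := by
        intro u hu
        rw [hBaddef, Finset.mem_filter] at hu
        obtain ⟨huY, i', hi'j, hai', hcase⟩ := hu
        rw [huniq i' hai'] at hcase
        rcases hcase with ⟨_, hne⟩ | ⟨hji, _⟩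
        · exact Finset.mem_filter.mpr ⟨huY, hne⟩
        · exact absurd (hlt.trans hji) (lt_irrefl i)
      calc ((Bad a).card : ℝ) ≤ ((Y.filter fun u => ¬ E a u).card : ℝ) := by
            exact_mod_cast Finset.card_le_card hsub
        _ ≤ lam * Y.card := hle
    · -- j < i : most u in Y satisfy E u a
      have hd := (hdens j i hgt).2 a hai
      unfold dens at hd
      rw [card_prod_filter_right] at hd
      simp only [Finset.card_singleton, Nat.cast_one, mul_one] at hd
      have hle : ((Y.filter fun u => ¬ E u a).card : ℝ) ≤ lam * Y.card :=
        filter_not_card_le Y (fun u => E u a) lam hYpos hd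
      have hsub : Bad a ⊆ Y.filter fun u => ¬ E u a := by
        intro u hu
        rw [hBaddef, Finset.mem_filter] at hu
        obtain ⟨huY, i', hi'j, hai', hcase⟩ := hu
        rw [huniq i' hai'] at hcase
        rcases hcase with ⟨hji, _⟩ | ⟨_, hne⟩
        · exact absurd (hgt.trans hji) (lt_irrefl j)
        · exact Finset.mem_filter.mpr ⟨huY, hne⟩
      calc ((Bad a).card : ℝ) ≤ ((Y.filter fun u => ¬ E u a).card : ℝ) := by
            exact_mod_cast Finset.card_le_card hsub
        _ ≤ lam * Y.card := hle
  have hsum : ((A.biUnion Bad).card : ℝ) < (Y.card : ℝ) := by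
    calc ((A.biUnion Bad).card : ℝ) ≤ ∑ a ∈ A, ((Bad a).card : ℝ) := by
          exact_mod_cast Finset.card_biUnion_le
      _ ≤ ∑ _a ∈ A, lam * (Y.card : ℝ) := Finset.sum_le_sum hBadcard
      _ = (A.card : ℝ) * lam * (Y.card : ℝ) := by
          rw [Finset.sum_const, nsmul_eq_mul]; ring
      _ < 1 * (Y.card : ℝ) := by
          exact mul_lt_mul_of_pos_right hk hYpos
      _ = (Y.card : ℝ) := one_mul _
  have hnotsub : ¬ Y ⊆ A.biUnion Bad := by
    intro h
    have := Finset.card_le_card h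
    have : (Y.card : ℝ) ≤ ((A.biUnion Bad).card : ℝ) := by exact_mod_cast this
    linarith
  obtain ⟨v, hvY, hvnot⟩ := Finset.not_subset.mp hnotsub
  refine ⟨v, hvY, ?_⟩
  intro a ha i hai
  constructor
  · intro hlt
    by_contra hne
    apply hvnot
    refine Finset.mem_biUnion.mpr ⟨a, ha, ?_⟩
    rw [hBaddef, Finset.mem_filter]
    exact ⟨hvY, i, ne_of_lt hlt, hai, Or.inl ⟨hlt, hne⟩⟩
  · intro hgt
    by_contra hne
    apply hvnot
    refine Finset.mem_biUnion.mpr ⟨a, ha, ?_⟩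
    rw [hBaddef, Finset.mem_filter]
    exact ⟨hvY, i, (ne_of_lt hgt).symm, hai, Or.inr ⟨hgt, hne⟩⟩
end

section
/- Let T be a tournament containing five vertices x, z, u, v, y with arcs (x,z), (z,u), (z,v), (z,y), (y,x), (y,u), (v,x), (u,v) all in E(T). Then, regardless of the orientations of the remaining arcs between these five vertices, T contains the boat tournament B (with vertex set {a,b,c,d} and arcs (d,a),(d,b),(c,a),(a,b),(b,c),(c,d)) as a subtournament on four of the five vertices. Specifically: if (u,x) ∈ E(T) then {x,z,u,y} induces a copy of B; if (y,v) ∈ E(T) then {x,z,v,y} induces a copy of B; and if (x,u),(v,y) ∈ E(T) then {x,u,v,y} induces a copy of B. -/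
open scoped Classical

/-- `a,b,c,d` induce a copy of the boat `B` (arc set
`{(d,a),(d,b),(c,a),(a,b),(b,c),(c,d)}`) in `E`. -/
def InducesBoat {V : Type*} (E : V → V → Prop) (a b c d : V) : Prop :=
  a ≠ b ∧ a ≠ c ∧ a ≠ d ∧ b ≠ c ∧ b ≠ d ∧ c ≠ d ∧
  E a b ∧ E b c ∧ E c d ∧ E d a ∧ E d b ∧ E c a

set_option maxHeartbeats 1000000 in
/-- A tournament containing the configuration `x,z,u,v,y` with the listed
arcs contains the boat on four of these five vertices, regardless of the
orientations of the remaining arcs. -/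
theorem five_vertices_contain_boat {V : Type*} (E : V → V → Prop)
    (hT : IsTournament E) (x z u v y : V)
    (hdist : List.Pairwise (· ≠ ·) [x, z, u, v, y])
    (a1 : E x z) (a2 : E z u) (a3 : E z v) (a4 : E z y) (a5 : E y x)
    (a6 : E y u) (a7 : E v x) (a8 : E u v) :
    ((E u x → ∃ a b c d : V, ({a, b, c, d} : Set V) = {x, z, u, y} ∧
        InducesBoat E a b c d) ∧
     (E y v → ∃ a b c d : V, ({a, b, c, d} : Set V) = {x, z, v, y} ∧
        InducesBoat E a b c d) ∧
     (E x u ∧ E v y → ∃ a b c d : V, ({a, b, c, d} : Set V) = {x, u, v, y} ∧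
        InducesBoat E a b c d)) ∧
    ∃ a b c d : V, ({a, b, c, d} : Set V) ⊆ ({x, z, u, v, y} : Set V) ∧
      InducesBoat E a b c d := by

  simp only [List.pairwise_cons, List.mem_cons, List.not_mem_nil, or_false,
    List.mem_singleton, List.Pairwise.nil, and_true, forall_eq_or_imp, forall_eq] at hdist
  obtain ⟨⟨hxz, hxu, hxv, hxy⟩, ⟨hzu, hzv, hzy⟩, ⟨huv, huy⟩, hvy, -⟩ := hdist
  have case1 : E u x → InducesBoat E u x z y := fun h =>
    ⟨(Ne.symm hxu), (Ne.symm hzu), huy, hxz, hxy, hzy, h, a1, a4, a6, a5, a2⟩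
  have case2 : E y v → InducesBoat E v x z y := fun h =>
    ⟨(Ne.symm hxv), (Ne.symm hzv), hvy, hxz, hxy, hzy, a7, a1, a4, h, a5, a3⟩
  have case3 : E x u → E v y → InducesBoat E x u v y := fun h1 h2 =>
    ⟨hxu, hxv, hxy, huv, huy, hvy, h1, a8, h2, a5, a6, a7⟩
  refine ⟨⟨?_, ?_, ?_⟩, ?_⟩
  · intro h
    exact ⟨u, x, z, y, by ext w; simp; try tauto, case1 h⟩
  · intro h
    exact ⟨v, x, z, y, by ext w; simp; try tauto, case2 h⟩
  · rintro ⟨h1, h2⟩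
    exact ⟨x, u, v, y, by ext w; simp; try tauto, case3 h1 h2⟩
  · by_cases hux : E u x
    · exact ⟨u, x, z, y, by intro w; simp; tauto, case1 hux⟩
    · have hxu' : E x u := ((hT.2 x u hxu).mpr hux)
      by_cases hvy' : E v y
      · exact ⟨x, u, v, y, by intro w; simp; tauto, case3 hxu' hvy'⟩
      · have hyv : E y v := ((hT.2 y v (Ne.symm hvy)).mpr hvy')
        exact ⟨v, x, z, y, by intro w; simp; tauto, case2 hyv⟩
end
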